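/- arXiv:1503.04070 — 5 statements merged into one kernel-verified Lean document; each statement's English description precedes it below -/
import Mathlib

section
/- Let 𝔽 be a field, let n ≥ 1 and k ≥ 0, let M be a k×n matrix over 𝔽, and let J_M be the associated bounded juggling pattern. For all integers i ≤ j with j − i + 1 ≤ n, the rank of the k×(j−i+1) matrix whose columns are v(i), v(i+1), …, v(j) (the cyclically repeated columns of M) equals the number of indices i′ ∈ [i, j] with J_M(i′) > j; equivalently, it equals |[i,j] \ J_M([i,j])|, the number of elements of the interval [i,j] not in the image of [i,j] under J_M. -/
noncomputable section
noncomputable section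

/-- The `n`-periodic sequence of columns of a `k × n` matrix: `colSeq hn M i`
is the `(i mod n)`-th column of `M`. -/
def colSeq {𝔽 : Type*} [Field 𝔽] {k n : ℕ} (hn : 0 < n)
    (M : Matrix (Fin k) (Fin n) 𝔽) (i : ℤ) : Fin k → 𝔽 :=
  fun r => M r ⟨(i % (n : ℤ)).toNat, by
    have h1 : 0 ≤ i % (n : ℤ) := Int.emod_nonneg i (by exact_mod_cast hn.ne')
    have h2 : i % (n : ℤ) < (n : ℤ) := Int.emod_lt_of_pos i (by exact_mod_cast hn)
    omega⟩

/-- `v i ∈ span (v (i+1), …, v j)`; the span of the empty family is `{0}`. -/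
def spanCond {𝔽 : Type*} [Field 𝔽] {k n : ℕ} (hn : 0 < n)
    (M : Matrix (Fin k) (Fin n) 𝔽) (i j : ℤ) : Prop :=
  colSeq hn M i ∈ Submodule.span 𝔽 (colSeq hn M '' Set.Ioc i j)

/-- The juggling function of the matrix `M`:
`J_M i = min { j ≥ i : v i ∈ span (v (i+1), …, v j) }`. -/
def JM {𝔽 : Type*} [Field 𝔽] {k n : ℕ} (hn : 0 < n)
    (M : Matrix (Fin k) (Fin n) 𝔽) (i : ℤ) : ℤ :=
  sInf {j : ℤ | i ≤ j ∧ spanCond hn M i j}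

namespace JMAux

variable {𝔽 : Type*} [Field 𝔽] {k n : ℕ} (hn : 0 < n) (M : Matrix (Fin k) (Fin n) 𝔽)

lemma colSeq_period (i : ℤ) : colSeq hn M (i + n) = colSeq hn M i := by
  funext r
  have h : (i + (n : ℤ)) % (n : ℤ) = i % (n : ℤ) := by
    rw [show i + (n : ℤ) = i + (n : ℤ) * 1 by ring, Int.add_mul_emod_self_left]
  simp only [colSeq, h]

lemma spanCond_mono {i j j' : ℤ} (h : j ≤ j') (hc : spanCond hn M i j) :
    spanCond hn M i j' := by
  refine Submodule.span_mono (Set.image_mono ?_) hc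
  exact Set.Ioc_subset_Ioc le_rfl h

lemma JM_mem (i : ℤ) : i ≤ JM hn M i ∧ spanCond hn M i (JM hn M i) := by
  have hne : ({j : ℤ | i ≤ j ∧ spanCond hn M i j}).Nonempty := by
    refine ⟨i + n, by exact_mod_cast le_add_of_nonneg_right (by positivity), ?_⟩
    refine Submodule.subset_span ⟨i + n, ⟨?_, le_rfl⟩, colSeq_period hn M i⟩
    exact lt_add_of_pos_right _ (by exact_mod_cast hn)
  have hbdd : BddBelow {j : ℤ | i ≤ j ∧ spanCond hn M i j} := ⟨i, fun x hx => hx.1⟩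
  exact Int.csInf_mem hne hbdd

lemma JM_le_iff {i j : ℤ} (hij : i ≤ j) : JM hn M i ≤ j ↔ spanCond hn M i j := by
  constructor
  · intro h
    exact spanCond_mono hn M h (JM_mem hn M i).2
  · intro h
    exact csInf_le ⟨i, fun x hx => hx.1⟩ ⟨hij, h⟩

lemma lt_JM_iff {i j : ℤ} (hij : i ≤ j) : j < JM hn M i ↔ ¬ spanCond hn M i j := by
  rw [← JM_le_iff hn M hij, not_le]

lemma JM_injective : Function.Injective (JM hn M) := by
  have key : ∀ a b : ℤ, a < b → JM hn M a = JM hn M b → False := by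
    intro a b hab heq
    set m := JM hn M b with hm
    have hb1 : b ≤ m := (JM_mem hn M b).1
    have hb2 : spanCond hn M b m := (JM_mem hn M b).2
    have ha2 : spanCond hn M a m := heq ▸ (JM_mem hn M a).2
    have ham : a < m := lt_of_lt_of_le hab hb1
    have hmin_a : ¬ spanCond hn M a (m - 1) := by
      intro hc
      have := (JM_le_iff hn M (by omega : a ≤ m - 1)).2 hc
      omega
    have hIoc : Set.Ioc a m = insert m (Set.Ioc a (m - 1)) := by
      ext x; simp only [Set.mem_Ioc, Set.mem_insert_iff]; omega
    have himg : colSeq hn M '' Set.Ioc a m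
        = insert (colSeq hn M m) (colSeq hn M '' Set.Ioc a (m - 1)) := by
      rw [hIoc, Set.image_insert_eq]
    rcases eq_or_lt_of_le hb1 with hbm | hbm
    · -- m = b : the column v m = v b is zero
      have hzero : colSeq hn M m = 0 := by
        have : Set.Ioc b m = (∅ : Set ℤ) := by
          ext x; simp only [Set.mem_Ioc, Set.mem_empty_iff_false, iff_false]; omega
        have hb2' := hb2
        rw [spanCond, this, Set.image_empty, Submodule.span_empty,
          Submodule.mem_bot] at hb2'
        exact hbm ▸ hb2'
      apply hmin_a
      have := ha2
      rw [spanCond, himg, hzero, Submodule.span_insert_eq_span (Submodule.zero_mem _)] at this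
      exact this
    · -- b < m
      have hmin_b : ¬ spanCond hn M b (m - 1) := by
        intro hc
        have := (JM_le_iff hn M (by omega : b ≤ m - 1)).2 hc
        omega
      have hIocb : Set.Ioc b m = insert m (Set.Ioc b (m - 1)) := by
        ext x; simp only [Set.mem_Ioc, Set.mem_insert_iff]; omega
      have hb2' : colSeq hn M b ∈
          Submodule.span 𝔽 (insert (colSeq hn M m) (colSeq hn M '' Set.Ioc b (m - 1))) := by
        have := hb2
        rwa [spanCond, hIocb, Set.image_insert_eq] at this
      have hex : colSeq hn M m ∈
          Submodule.span 𝔽 (insert (colSeq hn M b) (colSeq hn M '' Set.Ioc b (m - 1))) :=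
        mem_span_insert_exchange hb2' hmin_b
      have hsub : insert (colSeq hn M b) (colSeq hn M '' Set.Ioc b (m - 1))
          ⊆ colSeq hn M '' Set.Ioc a (m - 1) := by
        intro x hx
        rcases hx with rfl | ⟨y, hy, rfl⟩
        · exact ⟨b, ⟨hab, by omega⟩, rfl⟩
        · simp only [Set.mem_Ioc] at hy
          exact ⟨y, ⟨by omega, hy.2⟩, rfl⟩
      have hmW : colSeq hn M m ∈ Submodule.span 𝔽 (colSeq hn M '' Set.Ioc a (m - 1)) :=
        Submodule.span_mono hsub hex
      apply hmin_a
      have := ha2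
      rw [spanCond, himg, Submodule.span_insert_eq_span hmW] at this
      exact this
  intro a b h
  by_contra hne
  rcases lt_or_gt_of_ne hne with h1 | h1
  · exact key a b h1 h
  · exact key b a h1 h.symm

lemma JM_le_self (i : ℤ) : i ≤ JM hn M i := (JM_mem hn M i).1

lemma finrank_span_insert {x : Fin k → 𝔽} {s : Set (Fin k → 𝔽)}
    (hx : x ∉ Submodule.span 𝔽 s) :
    Module.finrank 𝔽 (Submodule.span 𝔽 (insert x s))
      = Module.finrank 𝔽 (Submodule.span 𝔽 s) + 1 := by
  have hx0 : x ≠ 0 := fun h => hx (h ▸ Submodule.zero_mem _)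
  have hinf : (𝔽 ∙ x) ⊓ Submodule.span 𝔽 s = ⊥ := by
    rw [Submodule.eq_bot_iff]
    rintro y ⟨hy1, hy2⟩
    obtain ⟨c, rfl⟩ := Submodule.mem_span_singleton.1 hy1
    rcases eq_or_ne c 0 with rfl | hc
    · simp
    · exfalso
      apply hx
      have : c⁻¹ • (c • x) ∈ Submodule.span 𝔽 s := Submodule.smul_mem _ _ hy2
      rwa [smul_smul, inv_mul_cancel₀ hc, one_smul] at this
  have hkey := Submodule.finrank_sup_add_finrank_inf_eq (𝔽 ∙ x) (Submodule.span 𝔽 s)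
  rw [hinf, finrank_bot, add_zero, finrank_span_singleton hx0] at hkey
  rw [Submodule.span_insert, hkey, add_comm]

/-- Downward induction: rank of `v '' Icc (j+1-d) j` counts the escapers. -/
lemma rank_count (j : ℤ) : ∀ d : ℕ,
    Module.finrank 𝔽 (Submodule.span 𝔽 (colSeq hn M '' Set.Icc (j + 1 - d) j))
      = ((Finset.Icc (j + 1 - (d : ℤ)) j).filter (fun s => j < JM hn M s)).card := by
  intro d
  induction d with
  | zero =>
      have h1 : Set.Icc (j + 1 - (0 : ℕ) : ℤ) j = (∅ : Set ℤ) := by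
        ext x; simp only [Set.mem_Icc, Set.mem_empty_iff_false, iff_false]
        push_cast; omega
      have h2 : Finset.Icc (j + 1 - ((0 : ℕ) : ℤ)) j = ∅ := by
        apply Finset.Icc_eq_empty; push_cast; omega
      rw [h1, h2, Set.image_empty, Submodule.span_empty, finrank_bot,
        Finset.filter_empty, Finset.card_empty]
  | succ d ih =>
      set t : ℤ := j + 1 - (d + 1 : ℕ) with ht
      have htj : t ≤ j := by push_cast [ht]; omega
      have hstep : j + 1 - (d : ℕ) = t + 1 := by push_cast [ht]; omega
      have hset : Set.Icc t j = insert t (Set.Icc (t + 1) j) := by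
        ext x; simp only [Set.mem_Icc, Set.mem_insert_iff]; omega
      have hIocIcc : Set.Ioc t j = Set.Icc (t + 1) j := by
        ext x; simp only [Set.mem_Icc, Set.mem_Ioc]; omega
      have hfin : Finset.Icc t j = insert t (Finset.Icc (t + 1) j) := by
        ext x
        simp only [Finset.mem_Icc, Finset.mem_insert]; omega
      have ihx := ih
      rw [hstep] at ihx
      have hcond : (j < JM hn M t) ↔ ¬ spanCond hn M t j := lt_JM_iff hn M htj
      have htnot : t ∉ Finset.Icc (t + 1) j := by simp
      rw [hset, Set.image_insert_eq, hfin, Finset.filter_insert]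
      by_cases hc : spanCond hn M t j
      · have hmem : colSeq hn M t ∈ Submodule.span 𝔽 (colSeq hn M '' Set.Icc (t + 1) j) := by
          rw [← hIocIcc]; exact hc
        rw [Submodule.span_insert_eq_span hmem, ihx, if_neg (by rw [hcond]; tauto)]
      · have hnmem : colSeq hn M t ∉ Submodule.span 𝔽 (colSeq hn M '' Set.Icc (t + 1) j) := by
          rw [← hIocIcc]; exact hc
        rw [finrank_span_insert hnmem, ihx, if_pos (hcond.2 hc),
          Finset.card_insert_of_notMem (by simp [Finset.mem_filter])]

end JMAux

/-- For integers `i ≤ j` with `j - i + 1 ≤ n`, the rank of the `k × (j-i+1)`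
matrix with columns `v i, v (i+1), …, v j` equals the number of `i' ∈ [i,j]`
with `J_M i' > j`, and also equals `|[i,j] \ J_M([i,j])|`. -/
theorem rank_eq_escaping_count {𝔽 : Type*} [Field 𝔽] (k n : ℕ) (hn : 0 < n)
    (M : Matrix (Fin k) (Fin n) 𝔽) (i j : ℤ) (hij : i ≤ j)
    (hlen : j - i + 1 ≤ (n : ℤ)) :
    (Matrix.of fun (r : Fin k) (c : ↥(Finset.Icc i j)) => colSeq hn M (c : ℤ) r).rank
        = ((Finset.Icc i j).filter (fun i' => j < JM hn M i')).card ∧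
    (Matrix.of fun (r : Fin k) (c : ↥(Finset.Icc i j)) => colSeq hn M (c : ℤ) r).rank
        = ((Finset.Icc i j) \ (Finset.Icc i j).image (JM hn M)).card := by
  classical
  set A := Finset.Icc i j with hA
  set f := JM hn M with hf
  -- First equality
  have hrange : Set.range (Matrix.of fun (r : Fin k) (c : ↥A) => colSeq hn M (c : ℤ) r).transpose
      = colSeq hn M '' Set.Icc i j := by
    ext x
    constructor
    · rintro ⟨c, rfl⟩
      exact ⟨(c : ℤ), by simpa using (Finset.mem_Icc.1 c.2), rfl⟩
    · rintro ⟨y, hy, rfl⟩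
      exact ⟨⟨y, Finset.mem_Icc.2 (Set.mem_Icc.1 hy)⟩, rfl⟩
  have hd : (0 : ℤ) ≤ j + 1 - i := by omega
  have hi_eq : j + 1 - ((j + 1 - i).toNat : ℤ) = i := by omega
  have hrank1 : (Matrix.of fun (r : Fin k) (c : ↥A) => colSeq hn M (c : ℤ) r).rank
      = (A.filter (fun i' => j < f i')).card := by
    rw [Matrix.rank_eq_finrank_span_cols, Matrix.col_def, hrange]
    have := JMAux.rank_count hn M j ((j + 1 - i).toNat)
    rw [hi_eq] at this
    exact this
  refine ⟨hrank1, ?_⟩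
  rw [hrank1]
  -- Second: card (A \ A.image f) = card (filter (j < f ·) A)
  have hinter : A ∩ A.image f = (A.filter (fun x => f x ≤ j)).image f := by
    ext m
    simp only [Finset.mem_inter, Finset.mem_image, Finset.mem_filter, hA, Finset.mem_Icc]
    constructor
    · rintro ⟨hm, x, hx, rfl⟩
      exact ⟨x, ⟨hx, hm.2⟩, rfl⟩
    · rintro ⟨x, ⟨⟨hx1, hx2⟩, hx3⟩, rfl⟩
      have hle := JMAux.JM_le_self hn M x
      exact ⟨⟨le_trans hx1 hle, hx3⟩, x, ⟨hx1, hx2⟩, rfl⟩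
  have hcard_image : ((A.filter (fun x => f x ≤ j)).image f).card
      = (A.filter (fun x => f x ≤ j)).card :=
    Finset.card_image_of_injective _ (JMAux.JM_injective hn M)
  have hsplit := Finset.card_filter_add_card_filter_not
    (s := A) (p := fun x => f x ≤ j)
  have hneg : A.filter (fun x => ¬ f x ≤ j) = A.filter (fun x => j < f x) := by
    apply Finset.filter_congr
    intro x _
    simp [not_le]
  rw [hneg] at hsplit
  have hsdiff := Finset.card_sdiff_add_card_inter A (A.image f)
  rw [hinter, hcard_image] at hsdiff
  omega

end
end
end

section
/- Let 𝔽 be a field, let n ≥ 1 and k ≥ 0, and let M be a k×n matrix over 𝔽 with associated bounded juggling pattern J_M. Then the ball number of J_M, namely (1/n)·∑_{i=1}^{n} (J_M(i) − i), equals the rank of M. -/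
noncomputable section
noncomputable section

namespace JMaux

variable {𝔽 : Type*} [Field 𝔽] {k n : ℕ} (hn : 0 < n) (M : Matrix (Fin k) (Fin n) 𝔽)

/-- span of columns `v (a+1), …, v b`. -/
def sp (a b : ℤ) : Submodule 𝔽 (Fin k → 𝔽) :=
  Submodule.span 𝔽 (colSeq hn M '' Set.Ioc a b)

/-- its dimension. -/
def dm (a b : ℤ) : ℕ := Module.finrank 𝔽 (sp hn M a b)

lemma colSeq_add (i : ℤ) : colSeq hn M (i + n) = colSeq hn M i := by
  funext r
  unfold colSeq
  congr 1
  apply Fin.ext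
  simp [Int.add_mul_emod_self_left]

lemma colSeq_mem_image (i : ℤ) : colSeq hn M i ∈ colSeq hn M '' Set.Ioc i (i + n) := by
  refine ⟨i + n, ?_, colSeq_add hn M i⟩
  constructor <;> omega

lemma sp_shift (a b : ℤ) : sp hn M (a + n) (b + n) = sp hn M a b := by
  unfold sp
  congr 1
  have : colSeq hn M '' Set.Ioc (a + n) (b + n) =
      colSeq hn M '' ((fun x => x + (n:ℤ)) '' Set.Ioc a b) := by
    rw [Set.image_add_const_Ioc]
  rw [this, Set.image_image]
  simp [colSeq_add hn M]

lemma dm_shift (a b : ℤ) : dm hn M (a + n) (b + n) = dm hn M a b := by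
  unfold dm; rw [sp_shift]

lemma sp_mono {a b b' : ℤ} (h : b ≤ b') : sp hn M a b ≤ sp hn M a b' :=
  Submodule.span_mono (Set.image_mono (Set.Ioc_subset_Ioc_right h))

lemma sp_pred {i j : ℤ} (h : i ≤ j) :
    sp hn M (i - 1) j = Submodule.span 𝔽 (insert (colSeq hn M i) (colSeq hn M '' Set.Ioc i j)) := by
  unfold sp
  congr 1
  rw [show Set.Ioc (i-1) j = insert i (Set.Ioc i j) by
    ext x; simp only [Set.mem_Ioc, Set.mem_insert_iff]; omega]
  rw [Set.image_insert_eq]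

lemma sp_le_pred {i j : ℤ} : sp hn M i j ≤ sp hn M (i - 1) j :=
  Submodule.span_mono (Set.image_mono (Set.Ioc_subset_Ioc_left (by omega)))

lemma spanCond_iff_sp {i j : ℤ} (h : i ≤ j) :
    spanCond hn M i j ↔ sp hn M (i-1) j = sp hn M i j := by
  constructor
  · intro hc
    refine le_antisymm ?_ (sp_le_pred hn M)
    rw [sp_pred hn M h, Submodule.span_le, Set.insert_subset_iff]
    exact ⟨hc, Submodule.subset_span⟩
  · intro he
    have : colSeq hn M i ∈ sp hn M (i-1) j := by
      rw [sp_pred hn M h]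
      exact Submodule.subset_span (Set.mem_insert _ _)
    rwa [he] at this

lemma spanCond_iff_dm {i j : ℤ} (h : i ≤ j) :
    spanCond hn M i j ↔ dm hn M (i-1) j = dm hn M i j := by
  rw [spanCond_iff_sp hn M h]
  constructor
  · intro he; unfold dm; rw [he]
  · intro he
    exact (Submodule.eq_of_le_of_finrank_eq (sp_le_pred hn M) he.symm).symm

lemma dm_le_pred {i j : ℤ} : dm hn M i j ≤ dm hn M (i-1) j :=
  Submodule.finrank_mono (sp_le_pred hn M)

lemma finrank_span_insert_le' {K V : Type*} [Field K] [AddCommGroup V] [Module K V]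
    [FiniteDimensional K V] (s : Set V) (x : V) :
    Module.finrank K (Submodule.span K (insert x s)) ≤
      Module.finrank K (Submodule.span K s) + 1 := by
  rw [Submodule.span_insert, add_comm]
  refine (Submodule.finrank_add_le_finrank_add_finrank _ _).trans ?_
  gcongr
  exact (finrank_span_le_card ({x} : Set V)).trans (by simp)

lemma dm_pred_le {i j : ℤ} (h : i ≤ j) : dm hn M (i-1) j ≤ dm hn M i j + 1 := by
  unfold dm
  rw [sp_pred hn M h]
  exact finrank_span_insert_le' _ _

lemma spanCond_mono {i j j' : ℤ} (h : j ≤ j') (hc : spanCond hn M i j) :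
    spanCond hn M i j' :=
  Submodule.span_mono (Set.image_mono (Set.Ioc_subset_Ioc_right h)) hc

lemma JM_mem (i : ℤ) : i ≤ JM hn M i ∧ spanCond hn M i (JM hn M i) := by
  have hne : {j : ℤ | i ≤ j ∧ spanCond hn M i j}.Nonempty :=
    ⟨i + n, by omega, Submodule.subset_span (colSeq_mem_image hn M i)⟩
  have hbdd : BddBelow {j : ℤ | i ≤ j ∧ spanCond hn M i j} := ⟨i, fun j hj => hj.1⟩
  exact Int.csInf_mem hne hbdd

lemma JM_le {i j : ℤ} (h : i ≤ j) (hc : spanCond hn M i j) : JM hn M i ≤ j :=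
  csInf_le ⟨i, fun x hx => hx.1⟩ ⟨h, hc⟩

lemma JM_le_add (i : ℤ) : JM hn M i ≤ i + n :=
  JM_le hn M (by omega) (Submodule.subset_span (colSeq_mem_image hn M i))

lemma lt_JM_iff {i j : ℤ} (h : i ≤ j) : j < JM hn M i ↔ ¬ spanCond hn M i j := by
  constructor
  · intro hlt hc
    exact absurd (JM_le hn M h hc) (by omega)
  · intro hnc
    by_contra hle
    push_neg at hle
    exact hnc (spanCond_mono hn M hle (JM_mem hn M i).2)

lemma JM_sub_eq_sum (i : ℤ) :
    JM hn M i - i = ∑ j ∈ Finset.Ico i (i + n),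
      ((dm hn M (i-1) j : ℤ) - (dm hn M i j : ℤ)) := by
  have key : ∀ j ∈ Finset.Ico i (i + n),
      ((dm hn M (i-1) j : ℤ) - (dm hn M i j : ℤ)) = if j < JM hn M i then 1 else 0 := by
    intro j hj
    rw [Finset.mem_Ico] at hj
    have hij : i ≤ j := hj.1
    by_cases h : j < JM hn M i
    · rw [if_pos h]
      have hns : ¬ spanCond hn M i j := (lt_JM_iff hn M hij).1 h
      have h1 : dm hn M (i-1) j ≤ dm hn M i j + 1 := dm_pred_le hn M hij
      have h2 : dm hn M i j ≤ dm hn M (i-1) j := dm_le_pred hn M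
      have h3 : dm hn M (i-1) j ≠ dm hn M i j := fun e => hns ((spanCond_iff_dm hn M hij).2 e)
      omega
    · rw [if_neg h]
      have hs : spanCond hn M i j := by
        by_contra hnc
        exact h ((lt_JM_iff hn M hij).2 hnc)
      rw [(spanCond_iff_dm hn M hij).1 hs]
      ring
  rw [Finset.sum_congr rfl key, Finset.sum_boole]
  have hfil : (Finset.Ico i (i + n)).filter (· < JM hn M i) = Finset.Ico i (JM hn M i) := by
    have h1 := (JM_mem hn M i).1
    have h2 := JM_le_add hn M i
    ext x
    simp only [Finset.mem_filter, Finset.mem_Ico]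
    omega
  rw [hfil, Int.card_Ico]
  have h1 := (JM_mem hn M i).1
  omega

lemma dm_self (a : ℤ) : dm hn M a a = 0 := by
  unfold dm sp
  simp

lemma image_window (a : ℤ) :
    colSeq hn M '' Set.Ioc a (a + n) = Set.range M.transpose := by
  apply Set.Subset.antisymm
  · rintro w ⟨x, -, rfl⟩
    refine ⟨⟨(x % (n:ℤ)).toNat, ?_⟩, ?_⟩
    · have h1 : 0 ≤ x % (n : ℤ) := Int.emod_nonneg x (by exact_mod_cast hn.ne')
      have h2 : x % (n : ℤ) < (n : ℤ) := Int.emod_lt_of_pos x (by exact_mod_cast hn)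
      omega
    · funext r
      simp [Matrix.transpose_apply, colSeq]
  · rintro w ⟨c, rfl⟩
    set y : ℤ := (c : ℤ) - (a + 1) with hy
    have hn' : (0:ℤ) < (n:ℤ) := by exact_mod_cast hn
    have hy1 : 0 ≤ y % n := Int.emod_nonneg y (by omega)
    have hy2 : y % n < n := Int.emod_lt_of_pos y hn'
    refine ⟨a + 1 + y % n, ⟨by omega, by omega⟩, ?_⟩
    have hmod : (a + 1 + y % n) % (n:ℤ) = (c:ℤ) := by
      have hrw : a + 1 + y % n = (c:ℤ) + (n:ℤ) * (-(y / n)) := by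
        rw [Int.emod_def]; ring
      rw [hrw, Int.add_mul_emod_self_left]
      exact Int.emod_eq_of_lt (by positivity) (by exact_mod_cast c.2)
    funext r
    simp only [colSeq, Matrix.transpose_apply]
    congr 1
    apply Fin.ext
    simp [hmod]

lemma dm_window (a : ℤ) : dm hn M a (a + n) = M.rank := by
  unfold dm sp
  rw [image_window hn M a, Matrix.rank_eq_finrank_span_cols]
  rfl

lemma sum_shift {n : ℕ} (hn : 0 < n) {h : ℤ → ℤ} (hp : h ((n:ℤ) + 1) = h 1) :
    ∑ i ∈ Finset.Icc (1:ℤ) (n:ℤ), h (i + 1) = ∑ i ∈ Finset.Icc (1:ℤ) (n:ℤ), h i := by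
  have e1 : ∑ i ∈ Finset.Icc (1:ℤ) (n:ℤ), h (i + 1)
      = ∑ i ∈ Finset.Icc (2:ℤ) ((n:ℤ) + 1), h i := by
    rw [show Finset.Icc (2:ℤ) ((n:ℤ)+1)
        = (Finset.Icc (1:ℤ) (n:ℤ)).map ⟨fun x => x + 1, add_left_injective 1⟩ by
      ext x; simp only [Finset.mem_map, Finset.mem_Icc, Function.Embedding.coeFn_mk]
      constructor
      · intro hx; exact ⟨x - 1, by omega, by ring⟩
      · rintro ⟨y, hy, rfl⟩; omega]
    rw [Finset.sum_map]
    rfl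
  rw [e1,
    show Finset.Icc (2:ℤ) ((n:ℤ)+1) = insert ((n:ℤ)+1) (Finset.Icc 2 (n:ℤ)) by
      ext x; simp only [Finset.mem_insert, Finset.mem_Icc]
      have : (1:ℤ) ≤ (n:ℤ) := by exact_mod_cast hn
      omega,
    show Finset.Icc (1:ℤ) (n:ℤ) = insert (1:ℤ) (Finset.Icc 2 (n:ℤ)) by
      ext x; simp only [Finset.mem_insert, Finset.mem_Icc]
      have : (1:ℤ) ≤ (n:ℤ) := by exact_mod_cast hn
      omega,
    Finset.sum_insert (by simp), Finset.sum_insert (by simp), hp]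

end JMaux

/-- The ball number of the bounded juggling pattern `J_M` associated to a
`k × n` matrix `M`, i.e. `(1/n) ∑_{i=1}^n (J_M i - i)`, equals the rank of
`M`; equivalently `∑_{i=1}^n (J_M i - i) = n · rank M`. -/
theorem ballNumber_JM_eq_rank {𝔽 : Type*} [Field 𝔽] (k n : ℕ) (hn : 0 < n)
    (M : Matrix (Fin k) (Fin n) 𝔽) :
    (∑ i ∈ Finset.Icc (1 : ℤ) (n : ℤ), (JM hn M i - i)) = (n : ℤ) * (M.rank : ℤ) := by
  classical
  have hIco : ∀ i : ℤ, Finset.Ico i (i + (n:ℤ)) =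
      (Finset.range n).map ⟨fun t : ℕ => i + (t:ℤ), show Function.Injective (fun t : ℕ => i + (t:ℤ)) from fun a b hab => by simpa using hab⟩ := by
    intro i; ext x
    simp only [Finset.mem_Ico, Finset.mem_map, Finset.mem_range, Function.Embedding.coeFn_mk]
    constructor
    · intro hx; exact ⟨(x - i).toNat, by omega, by omega⟩
    · rintro ⟨t, ht, rfl⟩; omega
  have step1 : ∀ i : ℤ, JM hn M i - i
      = ∑ t ∈ Finset.range n,
          ((JMaux.dm hn M (i-1) (i + (t:ℤ)) : ℤ) - (JMaux.dm hn M i (i + (t:ℤ)) : ℤ)) := by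
    intro i
    rw [JMaux.JM_sub_eq_sum hn M i, hIco i, Finset.sum_map]
    simp only [Function.Embedding.coeFn_mk]
  rw [Finset.sum_congr rfl (fun i _ => step1 i), Finset.sum_comm]
  set F : ℕ → ℤ := fun t =>
    ∑ i ∈ Finset.Icc (1:ℤ) (n:ℤ), (JMaux.dm hn M (i-1) (i-1+(t:ℤ)) : ℤ) with hF
  have inner : ∀ t ∈ Finset.range n,
      (∑ i ∈ Finset.Icc (1:ℤ) (n:ℤ),
        ((JMaux.dm hn M (i-1) (i + (t:ℤ)) : ℤ) - (JMaux.dm hn M i (i + (t:ℤ)) : ℤ)))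
      = F (t+1) - F t := by
    intro t _
    rw [Finset.sum_sub_distrib]
    congr 1
    · refine Finset.sum_congr rfl fun i _ => ?_
      congr 2
      push_cast; ring
    · have key : JMaux.dm hn M ((n:ℤ)+1-1) ((n:ℤ)+1-1+(t:ℤ))
          = JMaux.dm hn M (1-1) (1-1+(t:ℤ)) := by
        rw [show ((n:ℤ)+1-1 : ℤ) = (1-1) + (n:ℤ) by ring]
        rw [show ((1:ℤ)-1) + (n:ℤ)+(t:ℤ) = (1-1+(t:ℤ)) + (n:ℤ) by ring]
        exact JMaux.dm_shift hn M _ _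
      have hp : ((JMaux.dm hn M ((n:ℤ)+1-1) ((n:ℤ)+1-1+(t:ℤ)) : ℕ) : ℤ)
          = ((JMaux.dm hn M (1-1) (1-1+(t:ℤ)) : ℕ) : ℤ) := by rw [key]
      have hs := JMaux.sum_shift hn
        (h := fun i => (JMaux.dm hn M (i-1) (i-1+(t:ℤ)) : ℤ)) hp
      calc ∑ i ∈ Finset.Icc (1:ℤ) (n:ℤ), (JMaux.dm hn M i (i+(t:ℤ)) : ℤ)
          = ∑ i ∈ Finset.Icc (1:ℤ) (n:ℤ), (JMaux.dm hn M (i+1-1) (i+1-1+(t:ℤ)) : ℤ) := by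
            refine Finset.sum_congr rfl fun i _ => ?_
            congr 2 <;> ring
        _ = F t := by rw [hF]; exact hs
  rw [Finset.sum_congr rfl inner, Finset.sum_range_sub F n]
  have hF0 : F 0 = 0 := by
    simp [hF, JMaux.dm_self hn M]
  have hFn : F n = (n:ℤ) * (M.rank : ℤ) := by
    show (∑ i ∈ Finset.Icc (1:ℤ) (n:ℤ), (JMaux.dm hn M (i-1) (i-1+((n:ℕ):ℤ)) : ℤ))
      = (n:ℤ) * (M.rank : ℤ)
    have hall : ∀ i ∈ Finset.Icc (1:ℤ) (n:ℤ),
        (JMaux.dm hn M (i-1) (i-1+(n:ℤ)) : ℤ) = (M.rank : ℤ) := fun i _ => by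
      rw [JMaux.dm_window hn M]
    rw [Finset.sum_congr rfl hall, Finset.sum_const, Int.card_Icc]
    simp [nsmul_eq_mul]
  rw [hF0, hFn, sub_zero]

end
end
end

section
/- Let J be a bounded juggling pattern of period n with ball number k. Then exactly k of the indices i ∈ {1, …, n} satisfy J(i) > n, and exactly n − k of them satisfy J(i) ≤ n. (That is, the East triangle of J contains exactly k dots and the West triangle contains exactly n − k dots.) -/
/-- For a bounded juggling pattern `J` of period `n` with ball number `k`,
exactly `k` of the indices `i ∈ {1, …, n}` satisfy `J i > n` (the East
triangle has `k` dots) and exactly `n - k` satisfy `J i ≤ n` (the West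
triangle has `n - k` dots). -/
theorem east_west_triangle_counts (n : ℕ) (hn : 1 ≤ n) (J : ℤ → ℤ)
    (hbij : Function.Bijective J)
    (hper : ∀ i : ℤ, J (i + n) = J i + n)
    (hbd : ∀ i : ℤ, 0 ≤ J i - i ∧ J i - i ≤ n)
    (k : ℕ) (hk : ∑ i ∈ Finset.Icc (1 : ℤ) (n : ℤ), (J i - i) = (n : ℤ) * k) :
    ((Finset.Icc (1 : ℤ) (n : ℤ)).filter (fun i => (n : ℤ) < J i)).card = k ∧
    ((Finset.Icc (1 : ℤ) (n : ℤ)).filter (fun i => J i ≤ (n : ℤ))).card = n - k := by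
  set S := Finset.Icc (1 : ℤ) (n : ℤ) with hS
  set f : ℤ → ℤ := fun i => if (n : ℤ) < J i then J i - n else J i with hf
  have hcardS : S.card = n := by
    rw [hS, Int.card_Icc]
    omega
  -- f maps S to S
  have hmaps : ∀ i ∈ S, f i ∈ S := by
    intro i hi
    simp only [hS, Finset.mem_Icc] at hi ⊢
    have := hbd i
    simp only [hf]
    split <;> omega
  -- f injective on S
  have hinj : Set.InjOn f S := by
    intro i hi j hj hij
    simp only [hS, Finset.coe_Icc, Set.mem_Icc] at hi hj
    simp only [hf] at hij
    split at hij <;> split at hij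
    · exact hbij.1 (by omega : J i = J j)
    · exfalso
      have : J i = J (j + n) := by rw [hper]; omega
      have := hbij.1 this
      omega
    · exfalso
      have : J j = J (i + n) := by rw [hper]; omega
      have := hbij.1 this
      omega
    · exact hbij.1 hij
  -- image of S under f is S
  have himg : S.image f = S := by
    apply Finset.eq_of_subset_of_card_le
    · intro x hx
      obtain ⟨i, hi, rfl⟩ := Finset.mem_image.mp hx
      exact hmaps i hi
    · rw [Finset.card_image_of_injOn hinj]
  have hsumf : ∑ i ∈ S, f i = ∑ i ∈ S, i := by
    conv_rhs => rw [← himg]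
    rw [Finset.sum_image (fun a ha b hb => hinj ha hb)]
  -- decompose sum
  have hdec : ∑ i ∈ S, (J i - i) = (S.filter (fun i => (n : ℤ) < J i)).card * n := by
    have : ∀ i ∈ S, J i - i = (f i - i) + (if (n : ℤ) < J i then (n : ℤ) else 0) := by
      intro i _
      simp only [hf]
      split <;> ring
    rw [Finset.sum_congr rfl this, Finset.sum_add_distrib]
    have h1 : ∑ i ∈ S, (f i - i) = 0 := by
      rw [Finset.sum_sub_distrib, hsumf, sub_self]
    have h2 : ∑ i ∈ S, (if (n : ℤ) < J i then (n : ℤ) else 0)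
        = (S.filter (fun i => (n : ℤ) < J i)).card * n := by
      rw [← Finset.sum_filter, Finset.sum_const, nsmul_eq_mul]
    rw [h1, h2, zero_add]
  have hE : ((S.filter (fun i => (n : ℤ) < J i)).card : ℤ) = k := by
    have hn' : (0 : ℤ) < n := by exact_mod_cast hn
    have : (n : ℤ) * ((S.filter (fun i => (n : ℤ) < J i)).card : ℤ) = (n : ℤ) * k := by
      rw [← hk, hdec]; ring
    exact mul_left_cancel₀ (ne_of_gt hn') this
  have hEk : (S.filter (fun i => (n : ℤ) < J i)).card = k := by exact_mod_cast hE
  refine ⟨hEk, ?_⟩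
  have h := Finset.card_filter_add_card_filter_not (s := S)
    (p := fun i => (n : ℤ) < J i)
  have heq : S.filter (fun i => ¬ (n : ℤ) < J i) = S.filter (fun i => J i ≤ (n : ℤ)) := by
    apply Finset.filter_congr
    intro i _
    simp [not_lt]
  rw [heq] at h
  omega
end

section
/- Let J be a bounded juggling pattern of period n with ball number k, and define J∨ : ℤ → ℤ by J∨(i) := J^{−1}(i + n). Then J∨ is again a bounded juggling pattern of period n (i.e. J∨ is a bijection with J∨(i+n) = J∨(i) + n and 0 ≤ J∨(i) − i ≤ n for all i ∈ ℤ), and its ball number is n − k. (This is the combinatorial content of Grassmannian duality D(Π_J) = Π_{J^{−1}∘(i↦i+n)}, which carries positroid varieties in Gr(k,n) to positroid varieties in Gr(n−k,n).) -/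
/-- If `J` is a bounded juggling pattern of period `n` with ball number `k`
(and `Jinv` is its two-sided inverse), then the dual pattern
`J∨ : i ↦ J⁻¹ (i + n)` is again a bounded juggling pattern of period `n`,
with ball number `n - k`. -/
theorem dual_juggling_pattern (n : ℕ) (hn : 1 ≤ n) (J Jinv : ℤ → ℤ)
    (hleft : Function.LeftInverse Jinv J)
    (hright : Function.RightInverse Jinv J)
    (hper : ∀ i : ℤ, J (i + n) = J i + n)
    (hbd : ∀ i : ℤ, 0 ≤ J i - i ∧ J i - i ≤ n)
    (k : ℤ) (hk : ∑ i ∈ Finset.Icc (1 : ℤ) (n : ℤ), (J i - i) = (n : ℤ) * k) :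
    Function.Bijective (fun i : ℤ => Jinv (i + n)) ∧
    (∀ i : ℤ, Jinv ((i + n) + n) = Jinv (i + n) + n) ∧
    (∀ i : ℤ, 0 ≤ Jinv (i + n) - i ∧ Jinv (i + n) - i ≤ n) ∧
    (∑ i ∈ Finset.Icc (1 : ℤ) (n : ℤ), (Jinv (i + n) - i)) = (n : ℤ) * ((n : ℤ) - k) := by
  have hn0 : (0:ℤ) < (n:ℤ) := by exact_mod_cast hn
  have hnne : (n:ℤ) ≠ 0 := ne_of_gt hn0
  -- Jinv is periodic
  have hJinvper : ∀ x : ℤ, Jinv (x + n) = Jinv x + n := by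
    intro x
    have h1 : J (Jinv x + n) = x + n := by rw [hper, hright]
    calc Jinv (x + n) = Jinv (J (Jinv x + n)) := by rw [h1]
      _ = Jinv x + n := hleft _
  -- generic: periodicity extends to multiples of n
  have gen : ∀ (f : ℤ → ℤ), (∀ x, f (x + n) = f x + n) →
      ∀ m x : ℤ, f (x + n * m) = f x + n * m := by
    intro f hf m
    induction m using Int.induction_on with
    | zero => simp
    | succ i ih =>
      intro x
      rw [show x + (n:ℤ) * ((i:ℤ)+1) = (x + n * i) + n by ring, hf, ih]; ring
    | pred i ih =>
      intro x
      have hf' : ∀ y : ℤ, f (y - n) = f y - n := by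
        intro y; have := hf (y - n); simp at this; linarith
      rw [show x + (n:ℤ) * (-(i:ℤ)-1) = (x + n * (-(i:ℤ))) - n by ring, hf', ih]; ring
  have hJper' := gen J hper
  have hJinvper' := gen Jinv hJinvper
  refine ⟨?_, ?_, ?_, ?_⟩
  · exact Function.Bijective.comp ⟨hright.injective, hleft.surjective⟩
      (Function.bijective_iff_has_inverse.mpr ⟨fun i => i - n, fun x => by ring, fun x => by ring⟩)
  · intro i; exact hJinvper (i + n)
  · intro i
    obtain ⟨h1, h2⟩ := hbd (Jinv (i + n))
    rw [hright] at h1 h2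
    constructor <;> linarith
  · -- the sum
    set ψ : ℤ → ℤ := fun i => (Jinv i - 1) % n + 1 with hψ
    set ψ' : ℤ → ℤ := fun j => (J j - 1) % n + 1 with hψ'
    have mem_of : ∀ g : ℤ → ℤ, ∀ a : ℤ, (g a - 1) % n + 1 ∈ Finset.Icc (1:ℤ) (n:ℤ) := by
      intro g a
      have h1 := Int.emod_nonneg (g a - 1) hnne
      have h2 := Int.emod_lt_of_pos (g a - 1) hn0
      simp only [Finset.mem_Icc]; omega
    have key : ∀ a : ℤ, ∃ q : ℤ, Jinv a = ψ a + n * q := by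
      intro a
      refine ⟨(Jinv a - 1) / n, ?_⟩
      have := Int.emod_add_mul_ediv (Jinv a - 1) n
      simp only [hψ]; omega
    have key' : ∀ a : ℤ, ∃ q : ℤ, J a = ψ' a + n * q := by
      intro a
      refine ⟨(J a - 1) / n, ?_⟩
      have := Int.emod_add_mul_ediv (J a - 1) n
      simp only [hψ']; omega
    have S2 : ∑ i ∈ Finset.Icc (1:ℤ) (n:ℤ), (Jinv i - i)
        = ∑ j ∈ Finset.Icc (1:ℤ) (n:ℤ), (j - J j) := by
      refine Finset.sum_nbij' (i := ψ) (j := ψ') (fun a _ => mem_of Jinv a)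
        (fun a _ => mem_of J a) ?_ ?_ ?_
      · -- ψ' (ψ a) = a
        intro a ha
        obtain ⟨q, hq⟩ := key a
        have hJ : J (ψ a) = a - n * q := by
          have : J (ψ a + n * q) = J (ψ a) + n * q := hJper' q (ψ a)
          rw [← hq, hright] at this; linarith
        simp only [hψ', hJ]
        simp only [Finset.mem_Icc] at ha
        have : (a - n * q - 1) % n = a - 1 := by
          rw [show a - (n:ℤ) * q - 1 = a - 1 + (-q) * n by ring, Int.add_mul_emod_self_right]
          exact Int.emod_eq_of_lt (by omega) (by omega)
        omega
      · -- ψ (ψ' a) = a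
        intro a ha
        obtain ⟨q, hq⟩ := key' a
        have hJi : Jinv (ψ' a) = a - n * q := by
          have : Jinv (ψ' a + n * q) = Jinv (ψ' a) + n * q := hJinvper' q (ψ' a)
          rw [← hq, hleft] at this; linarith
        simp only [hψ, hJi]
        simp only [Finset.mem_Icc] at ha
        have : (a - n * q - 1) % n = a - 1 := by
          rw [show a - (n:ℤ) * q - 1 = a - 1 + (-q) * n by ring, Int.add_mul_emod_self_right]
          exact Int.emod_eq_of_lt (by omega) (by omega)
        omega
      · -- Jinv a - a = ψ a - J (ψ a)
        intro a ha
        obtain ⟨q, hq⟩ := key a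
        have hJ : J (ψ a) = a - n * q := by
          have : J (ψ a + n * q) = J (ψ a) + n * q := hJper' q (ψ a)
          rw [← hq, hright] at this; linarith
        rw [hJ, hq]; ring
    have S2' : ∑ i ∈ Finset.Icc (1:ℤ) (n:ℤ), (Jinv i - i) = -((n:ℤ) * k) := by
      rw [S2, ← hk, ← Finset.sum_neg_distrib]
      exact Finset.sum_congr rfl (fun x _ => by ring)
    have card : (Finset.Icc (1:ℤ) (n:ℤ)).card = n := by
      rw [Int.card_Icc]; simp
    calc ∑ i ∈ Finset.Icc (1:ℤ) (n:ℤ), (Jinv (i + n) - i)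
        = ∑ i ∈ Finset.Icc (1:ℤ) (n:ℤ), ((Jinv i - i) + n) := by
          refine Finset.sum_congr rfl (fun i _ => ?_)
          rw [hJinvper]; ring
      _ = -((n:ℤ) * k) + n * n := by
          rw [Finset.sum_add_distrib, S2', Finset.sum_const, card, nsmul_eq_mul]
      _ = (n:ℤ) * ((n:ℤ) - k) := by ring
end

section
/- Let n ≥ 1 and let π be a partial injection from the set {1, …, n} to itself, defined on a subset D ⊆ {1,…,n}, such that π(i) ≥ i for all i ∈ D (an upper triangular partial permutation). Then there exists a unique bijection J : ℤ → ℤ satisfying: (a) J(i+n) = J(i) + n for all i ∈ ℤ; (b) 0 ≤ J(i) − i ≤ n for all i ∈ ℤ; (c) J(i) = π(i) for all i ∈ D; (d) J(i) > n for all i ∈ {1,…,n} \ D; and (e) J is strictly increasing on {1,…,n} \ D. In other words, every upper triangular partial permutation matrix extends uniquely to the window of a bounded juggling pattern whose East triangle runs northwest-to-southeast. -/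
lemma counting_emb {N : ℕ} (A B : Finset ℤ) (hA : A.card = N) (hB : B.card = N)
    (h : ∀ t : ℤ, (A.filter (· ≤ t)).card ≤ (B.filter (· ≤ t)).card) (k : Fin N) :
    B.orderEmbOfFin hB k ≤ A.orderEmbOfFin hA k := by
  by_contra hlt
  push_neg at hlt
  set a := A.orderEmbOfFin hA k with ha
  have h1 : k.val + 1 ≤ (A.filter (· ≤ a)).card := by
    have hsub : (Finset.Iic k).image (A.orderEmbOfFin hA) ⊆ A.filter (· ≤ a) := by
      intro x hx
      simp only [Finset.mem_image, Finset.mem_Iic] at hx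
      obtain ⟨j, hj, rfl⟩ := hx
      simp only [Finset.mem_filter]
      exact ⟨Finset.orderEmbOfFin_mem _ _ _, (A.orderEmbOfFin hA).monotone hj⟩
    calc k.val + 1 = (Finset.Iic k).card := (Fin.card_Iic k).symm
      _ = ((Finset.Iic k).image (A.orderEmbOfFin hA)).card :=
          (Finset.card_image_of_injective _ (A.orderEmbOfFin hA).injective).symm
      _ ≤ _ := Finset.card_le_card hsub
  have h2 : (B.filter (· ≤ a)).card ≤ k.val := by
    have hsub : B.filter (· ≤ a) ⊆ (Finset.Iio k).image (B.orderEmbOfFin hB) := by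
      intro x hx
      simp only [Finset.mem_filter] at hx
      obtain ⟨hxB, hxa⟩ := hx
      have : x ∈ Set.range (B.orderEmbOfFin hB) := by
        rw [Finset.range_orderEmbOfFin]; exact hxB
      obtain ⟨j, rfl⟩ := this
      simp only [Finset.mem_image, Finset.mem_Iio]
      refine ⟨j, ?_, rfl⟩
      have : B.orderEmbOfFin hB j < B.orderEmbOfFin hB k := lt_of_le_of_lt hxa hlt
      exact (B.orderEmbOfFin hB).strictMono.lt_iff_lt.mp this
    calc (B.filter (· ≤ a)).card ≤ ((Finset.Iio k).image (B.orderEmbOfFin hB)).card :=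
          Finset.card_le_card hsub
      _ = (Finset.Iio k).card := Finset.card_image_of_injective _ (B.orderEmbOfFin hB).injective
      _ = k.val := Fin.card_Iio k
  have := h a
  omega


/-- Every upper triangular partial permutation matrix (a partial injection `π`
defined on `D ⊆ {1,…,n}` with values in `{1,…,n}` and `π i ≥ i`) extends
uniquely to the window of a bounded juggling pattern of period `n` whose East
triangle runs northwest-to-southeast: there is a unique bijection `J : ℤ → ℤ`
with `J (i+n) = J i + n`, `0 ≤ J i - i ≤ n`, `J = π` on `D`, `J i > n` for
`i ∈ {1,…,n} \ D`, and `J` strictly increasing on `{1,…,n} \ D`. -/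
theorem partialPerm_extends_uniquely (n : ℕ) (hn : 1 ≤ n)
    (D : Finset ℤ) (hD : D ⊆ Finset.Icc (1 : ℤ) (n : ℤ))
    (π : ℤ → ℤ)
    (hmem : ∀ i ∈ D, π i ∈ Finset.Icc (1 : ℤ) (n : ℤ))
    (hinj : ∀ i ∈ D, ∀ j ∈ D, π i = π j → i = j)
    (hup : ∀ i ∈ D, i ≤ π i) :
    ∃! J : ℤ → ℤ,
      Function.Bijective J ∧
      (∀ i : ℤ, J (i + n) = J i + n) ∧
      (∀ i : ℤ, 0 ≤ J i - i ∧ J i - i ≤ n) ∧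
      (∀ i ∈ D, J i = π i) ∧
      (∀ i ∈ Finset.Icc (1 : ℤ) (n : ℤ), i ∉ D → (n : ℤ) < J i) ∧
      (∀ i ∈ Finset.Icc (1 : ℤ) (n : ℤ), ∀ j ∈ Finset.Icc (1 : ℤ) (n : ℤ),
        i ∉ D → j ∉ D → i < j → J i < J j) := by
  classical
  have hnpos : (0:ℤ) < (n:ℤ) := by exact_mod_cast hn
  have hn0 : (n:ℤ) ≠ 0 := ne_of_gt hnpos
  set I : Finset ℤ := Finset.Icc (1:ℤ) (n:ℤ) with hIdef
  set P : Finset ℤ := D.image π with hPdef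
  set E : Finset ℤ := I \ D with hEdef
  set C : Finset ℤ := I \ P with hCdef
  have hPI : P ⊆ I := by
    intro x hx
    simp only [hPdef, Finset.mem_image] at hx
    obtain ⟨j, hj, rfl⟩ := hx
    exact hmem j hj
  have hPcard : P.card = D.card := Finset.card_image_of_injOn (fun a ha b hb => hinj a ha b hb)
  have hIcard : I.card = n := by
    simp [hIdef, Int.card_Icc]
  have hNC : C.card = E.card := by
    rw [hCdef, hEdef, Finset.card_sdiff_of_subset hPI, Finset.card_sdiff_of_subset hD, hPcard]
  -- order isomorphisms
  set N := E.card with hNdef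
  let eE : Fin N ≃o E := E.orderIsoOfFin rfl
  let eC : Fin N ≃o C := C.orderIsoOfFin hNC
  -- counting condition
  have hcount : ∀ t : ℤ, (E.filter (· ≤ t)).card ≤ (C.filter (· ≤ t)).card := by
    intro t
    have hE' : E.filter (· ≤ t) = I.filter (· ≤ t) \ D.filter (· ≤ t) := by
      ext x; simp only [hEdef, Finset.mem_filter, Finset.mem_sdiff]; tauto
    have hC' : C.filter (· ≤ t) = I.filter (· ≤ t) \ P.filter (· ≤ t) := by
      ext x; simp only [hCdef, Finset.mem_filter, Finset.mem_sdiff]; tauto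
    have hDsub : D.filter (· ≤ t) ⊆ I.filter (· ≤ t) :=
      Finset.filter_subset_filter _ hD
    have hPsub : P.filter (· ≤ t) ⊆ I.filter (· ≤ t) :=
      Finset.filter_subset_filter _ hPI
    have hPD : (P.filter (· ≤ t)).card ≤ (D.filter (· ≤ t)).card := by
      have himg : P.filter (· ≤ t) = (D.filter (fun i => π i ≤ t)).image π := by
        ext x
        simp only [hPdef, Finset.mem_filter, Finset.mem_image]
        constructor
        · rintro ⟨⟨j, hj, rfl⟩, hle⟩; exact ⟨j, ⟨hj, hle⟩, rfl⟩
        · rintro ⟨j, ⟨hj, hle⟩, rfl⟩; exact ⟨⟨j, hj, rfl⟩, hle⟩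
      rw [himg, Finset.card_image_of_injOn (fun a ha b hb =>
        hinj a (Finset.mem_filter.mp ha).1 b (Finset.mem_filter.mp hb).1)]
      apply Finset.card_le_card
      intro x hx
      simp only [Finset.mem_filter] at hx ⊢
      exact ⟨hx.1, le_trans (hup x hx.1) hx.2⟩
    rw [hE', hC', Finset.card_sdiff_of_subset hDsub, Finset.card_sdiff_of_subset hPsub]
    omega
  have hkey : ∀ k : Fin N, ((eC k : ℤ)) ≤ ((eE k : ℤ)) := by
    intro k
    rw [Finset.coe_orderIsoOfFin_apply, Finset.coe_orderIsoOfFin_apply]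
    exact counting_emb E C rfl hNC hcount k
  -- the window function
  let w : ℤ → ℤ := fun r => if h : r ∈ E then (n:ℤ) + (eC (eE.symm ⟨r, h⟩) : ℤ) else π r
  let J : ℤ → ℤ := fun i => w ((i - 1) % n + 1) + n * ((i - 1) / n)
  have hwE : ∀ r (h : r ∈ E), w r = (n:ℤ) + (eC (eE.symm ⟨r, h⟩) : ℤ) := by
    intro r h; simp only [w, dif_pos h]
  have hwD : ∀ r ∈ D, w r = π r := by
    intro r hr
    have : r ∉ E := by simp [hEdef, hr]
    simp only [w, dif_neg this]
  -- window reduction facts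
  have hrmem : ∀ i : ℤ, (i - 1) % n + 1 ∈ I := by
    intro i
    simp only [hIdef, Finset.mem_Icc]
    have h1 := Int.emod_nonneg (i - 1) hn0
    have h2 := Int.emod_lt_of_pos (i - 1) hnpos
    omega
  have hdecomp : ∀ i : ℤ, ((i - 1) % n + 1) + n * ((i - 1) / n) = i := by
    intro i
    have := Int.emod_add_mul_ediv (i - 1) (n:ℤ)
    linarith
  have hwin : ∀ i ∈ I, ((i - 1) % n + 1 = i ∧ (i - 1) / n = 0) := by
    intro i hi
    simp only [hIdef, Finset.mem_Icc] at hi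
    have h1 : (i - 1) % n = i - 1 := Int.emod_eq_of_lt (by omega) (by omega)
    have h2 : (i - 1) / n = 0 := Int.ediv_eq_zero_of_lt (by omega) (by omega)
    exact ⟨by omega, h2⟩
  have hJwin : ∀ i ∈ I, J i = w i := by
    intro i hi
    obtain ⟨h1, h2⟩ := hwin i hi
    simp only [J, h1, h2, mul_zero, add_zero]
  have hshift : ∀ r t : ℤ, J (r + n * t) = J r + n * t := by
    intro r t
    have e1 : (r + n * t - 1) % n = (r - 1) % n := by
      rw [show r + n * t - 1 = (r - 1) + (n:ℤ) * t by ring, Int.add_mul_emod_self_left]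
    have e2 : (r + n * t - 1) / n = (r - 1) / n + t := by
      rw [show r + n * t - 1 = (r - 1) + (n:ℤ) * t by ring, Int.add_mul_ediv_left _ t hn0]
    simp only [J, e1, e2]
    ring
  -- membership facts for eC, eE
  have heCmem : ∀ k : Fin N, ((eC k : ℤ)) ∈ C := (fun k => (eC k).2)
  have heEmem : ∀ k : Fin N, ((eE k : ℤ)) ∈ E := (fun k => (eE k).2)
  have hCI : C ⊆ I := Finset.sdiff_subset
  have hEI : E ⊆ I := Finset.sdiff_subset
  -- the "reduced" function v
  let v : ℤ → ℤ := fun r => if r ∈ E then w r - n else w r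
  have hvE : ∀ r (h : r ∈ E), v r = (eC (eE.symm ⟨r, h⟩) : ℤ) := by
    intro r h
    simp only [v, if_pos h, hwE r h]; ring
  have hvD : ∀ r ∈ D, v r = π r := by
    intro r hr
    have : r ∉ E := by simp [hEdef, hr]
    simp only [v, if_neg this]
    exact hwD r hr
  have hDE : ∀ r ∈ I, r ∉ E → r ∈ D := by
    intro r hr h
    by_contra hd
    exact h (by simp [hEdef, hr, hd])
  have hvmem : ∀ r ∈ I, v r ∈ I := by
    intro r hr
    by_cases h : r ∈ E
    · rw [hvE r h]; exact hCI (heCmem _)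
    · rw [hvD r (hDE r hr h)]; exact hmem r (hDE r hr h)
  have hvinC : ∀ r (h : r ∈ E), v r ∈ C := fun r h => by rw [hvE r h]; exact heCmem _
  have hvinP : ∀ r ∈ D, v r ∈ P := by
    intro r hr
    rw [hvD r hr]
    exact Finset.mem_image_of_mem π hr
  have hCP : ∀ x ∈ C, x ∉ P := by
    intro x hx; simp only [hCdef, Finset.mem_sdiff] at hx; exact hx.2
  have hvinj : ∀ r ∈ I, ∀ s ∈ I, v r = v s → r = s := by
    intro r hr s hs hv
    by_cases hrE : r ∈ E <;> by_cases hsE : s ∈ E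
    · rw [hvE r hrE, hvE s hsE] at hv
      have : eE.symm ⟨r, hrE⟩ = eE.symm ⟨s, hsE⟩ := by
        apply eC.injective
        exact Subtype.ext hv
      have := congrArg eE this
      simp only [OrderIso.apply_symm_apply] at this
      exact congrArg Subtype.val this
    · exact absurd (hv ▸ hvinC r hrE) (fun hc => hCP _ hc (hvinP s (hDE s hs hsE)))
    · exact absurd (hv ▸ hvinC s hsE) (fun hc => hCP _ hc (hvinP r (hDE r hr hrE)))
    · exact hinj r (hDE r hr hrE) s (hDE s hs hsE) (by rw [← hvD r (hDE r hr hrE), ← hvD s (hDE s hs hsE), hv])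
  have hvsurj : ∀ m ∈ I, ∃ r ∈ I, v r = m := by
    intro m hm
    by_cases hmP : m ∈ P
    · simp only [hPdef, Finset.mem_image] at hmP
      obtain ⟨j, hj, rfl⟩ := hmP
      exact ⟨j, hD hj, hvD j hj⟩
    · have hmC : m ∈ C := by simp [hCdef, hm, hmP]
      set k := eC.symm ⟨m, hmC⟩ with hk
      refine ⟨(eE k : ℤ), hEI (heEmem k), ?_⟩
      rw [hvE _ (heEmem k)]
      have : eE.symm ⟨(eE k : ℤ), heEmem k⟩ = k := by
        apply eE.injective; simp only [OrderIso.apply_symm_apply]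
      rw [this, hk]
      simp only [OrderIso.apply_symm_apply]
  have hwv : ∀ r, w r = v r ∨ w r = v r + n := by
    intro r
    by_cases h : r ∈ E
    · right; simp only [v, if_pos h]; ring
    · left; simp only [v, if_neg h]
  -- window bounds
  have hwbound : ∀ r ∈ I, r ≤ w r ∧ w r ≤ r + n := by
    intro r hr
    have hrI : (1:ℤ) ≤ r ∧ r ≤ n := by simpa [hIdef, Finset.mem_Icc] using hr
    by_cases h : r ∈ E
    · rw [hwE r h]
      set k := eE.symm ⟨r, h⟩ with hk
      have hck : ((eC k : ℤ)) ∈ C := heCmem k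
      have hckI : (1:ℤ) ≤ (eC k : ℤ) ∧ ((eC k : ℤ)) ≤ n := by
        simpa [hIdef, Finset.mem_Icc] using hCI hck
      have hek : ((eE k : ℤ)) = r := by
        rw [hk]
        have : eE (eE.symm ⟨r, h⟩) = ⟨r, h⟩ := eE.apply_symm_apply _
        exact congrArg Subtype.val this
      have := hkey k
      constructor
      · omega
      · rw [hek] at this; omega
    · have hd := hDE r hr h
      rw [hwD r hd]
      have h1 := hup r hd
      have h2 : (1:ℤ) ≤ π r ∧ π r ≤ n := by simpa [hIdef, Finset.mem_Icc] using hmem r hd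
      omega
  -- now assemble
  refine ⟨J, ⟨⟨?_, ?_⟩, ?_, ?_, ?_, ?_, ?_⟩, ?_⟩
  · -- injective
    intro i j hij
    simp only [J] at hij
    set ri := (i - 1) % n + 1 with hri
    set rj := (j - 1) % n + 1 with hrj
    have hriI := hrmem i
    have hrjI := hrmem j
    obtain ⟨ei, hei1, hei2⟩ : ∃ e : ℤ, (e = 0 ∨ e = 1) ∧ w ri = v ri + n * e := by
      rcases hwv ri with h | h
      · exact ⟨0, Or.inl rfl, by omega⟩
      · exact ⟨1, Or.inr rfl, by omega⟩
    obtain ⟨ej, hej1, hej2⟩ : ∃ e : ℤ, (e = 0 ∨ e = 1) ∧ w rj = v rj + n * e := by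
      rcases hwv rj with h | h
      · exact ⟨0, Or.inl rfl, by omega⟩
      · exact ⟨1, Or.inr rfl, by omega⟩
    have hvi := hvmem ri hriI
    have hvj := hvmem rj hrjI
    simp only [hIdef, Finset.mem_Icc] at hvi hvj
    set d : ℤ := (ej + (j - 1) / n) - (ei + (i - 1) / n) with hd
    have key : v ri - v rj = (n:ℤ) * d := by
      rw [hd]; rw [hei2, hej2] at hij; ring_nf; ring_nf at hij; linarith
    have hd0 : d = 0 := by
      rcases lt_trichotomy d 0 with h | h | h
      · have : (n:ℤ) * d ≤ n * (-1) := by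
          apply mul_le_mul_of_nonneg_left (by omega) (le_of_lt hnpos)
        linarith
      · exact h
      · have : (n:ℤ) * 1 ≤ n * d := by
          apply mul_le_mul_of_nonneg_left (by omega) (le_of_lt hnpos)
        linarith
    have hvrirj : v ri = v rj := by rw [hd0, mul_zero] at key; linarith
    have hre : ri = rj := hvinj ri hriI rj hrjI hvrirj
    have hq : (i - 1) / n = (j - 1) / n := by
      rw [hre] at hij
      have : (n:ℤ) * ((i - 1) / n) = n * ((j - 1) / n) := by linarith
      exact mul_left_cancel₀ hn0 this
    have d1 := hdecomp i
    have d2 := hdecomp j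
    rw [← hri] at d1
    rw [← hrj] at d2
    rw [hre, hq] at d1
    linarith
  · -- surjective
    intro m
    have hrmI := hrmem m
    obtain ⟨r, hrI, hvr⟩ := hvsurj _ hrmI
    have hdm := hdecomp m
    rcases hwv r with h | h
    · refine ⟨r + n * ((m - 1) / n), ?_⟩
      rw [hshift, hJwin r hrI, h, hvr]
      linarith
    · refine ⟨r + n * ((m - 1) / n - 1), ?_⟩
      rw [hshift, hJwin r hrI, h, hvr]
      have : (n:ℤ) * ((m - 1) / n - 1) = n * ((m - 1) / n) - n := by ring
      linarith
  · -- periodicity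
    intro i
    have := hshift i 1
    rw [mul_one] at this
    exact this
  · -- bounds
    intro i
    have hd := hdecomp i
    have hb := hwbound _ (hrmem i)
    have : J i - i = w ((i - 1) % n + 1) - ((i - 1) % n + 1) := by
      simp only [J]; linarith
    omega
  · -- equals π on D
    intro i hi
    rw [hJwin i (hD hi), hwD i hi]
  · -- greater than n off D
    intro i hiI hiD
    have hiE : i ∈ E := by simp [hEdef, hiI, hiD]
    rw [hJwin i hiI, hwE i hiE]
    have := hCI (heCmem (eE.symm ⟨i, hiE⟩))
    simp only [hIdef, Finset.mem_Icc] at this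
    omega
  · -- strictly increasing off D
    intro i hiI j hjI hiD hjD hij
    have hiE : i ∈ E := by simp [hEdef, hiI, hiD]
    have hjE : j ∈ E := by simp [hEdef, hjI, hjD]
    rw [hJwin i hiI, hwE i hiE, hJwin j hjI, hwE j hjE]
    have hlt : eE.symm ⟨i, hiE⟩ < eE.symm ⟨j, hjE⟩ := by
      rw [← eE.lt_iff_lt] at *
      simp only [OrderIso.apply_symm_apply]
      exact Subtype.mk_lt_mk.mpr hij
    have := eC.strictMono hlt
    have : ((eC (eE.symm ⟨i, hiE⟩) : ℤ)) < ((eC (eE.symm ⟨j, hjE⟩) : ℤ)) :=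
      Subtype.coe_lt_coe.mpr this
    omega
  · -- uniqueness
    rintro J' ⟨hbij', ha', hb', hc', hd', he'⟩
    have hshift' : ∀ t : ℤ, ∀ i : ℤ, J' (i + n * t) = J' i + n * t := by
      intro t
      induction t using Int.induction_on with
      | zero => simp
      | succ t iht =>
        intro i
        have : i + (n:ℤ) * (t + 1) = (i + n * t) + n := by ring
        rw [this, ha', iht]
        ring
      | pred t iht =>
        intro i
        have h1 : (i + (n:ℤ) * (-t - 1)) + n = i + n * (-t) := by ring
        have := ha' (i + (n:ℤ) * (-t - 1))
        rw [h1, iht] at this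
        have : J' (i + (n:ℤ) * (-t - 1)) = J' i + n * (-t) - n := by linarith
        rw [this]; ring
    have hJ'win : ∀ i ∈ I, J' i = J i := by
      intro i hiI
      by_cases hiD : i ∈ D
      · rw [hc' i hiD, hJwin i hiI, hwD i hiD]
      · have hiE : i ∈ E := by simp [hEdef, hiI, hiD]
        -- g is the increasing enumeration of J' - n on E
        set g : Fin N → ℤ := fun k => J' ((eE k : ℤ)) - n with hg
        have hEk : ∀ k : Fin N, ((eE k : ℤ)) ∈ I ∧ ((eE k : ℤ)) ∉ D := by
          intro k
          have := heEmem k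
          simp only [hEdef, Finset.mem_sdiff] at this
          exact this
        have hgmono : StrictMono g := by
          intro k l hkl
          have h1 : ((eE k : ℤ)) < ((eE l : ℤ)) := Subtype.coe_lt_coe.mpr (eE.strictMono hkl)
          have := he' _ (hEk k).1 _ (hEk l).1 (hEk k).2 (hEk l).2 h1
          simp only [hg]
          omega
        have hgmem : ∀ k : Fin N, g k ∈ C := by
          intro k
          obtain ⟨hkI, hkD⟩ := hEk k
          have h1 := hd' _ hkI hkD
          have h2 := (hb' ((eE k : ℤ))).2
          have hkn : ((eE k : ℤ)) ≤ n := by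
            simp only [hIdef, Finset.mem_Icc] at hkI; exact hkI.2
          have hgI : g k ∈ I := by
            simp only [hIdef, Finset.mem_Icc, hg]
            constructor <;> omega
          have hgP : g k ∉ P := by
            intro hp
            simp only [hPdef, Finset.mem_image] at hp
            obtain ⟨j, hjD, hj⟩ := hp
            have : J' ((eE k : ℤ)) = J' (j + n) := by
              have := ha' j
              rw [hc' j hjD] at this
              simp only [hg] at hj
              omega
            have := hbij'.1 this
            have hjI := hD hjD
            simp only [hIdef, Finset.mem_Icc] at hjI
            omega
          simp [hCdef, hgI, hgP]
        have hgeq : g = fun k => C.orderEmbOfFin hNC k :=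
          Finset.orderEmbOfFin_unique hNC hgmem hgmono
        set k := eE.symm ⟨i, hiE⟩ with hk
        have hek : ((eE k : ℤ)) = i := by
          rw [hk]
          exact congrArg Subtype.val (eE.apply_symm_apply _)
        have : g k = C.orderEmbOfFin hNC k := congrFun hgeq k
        rw [hg] at this
        simp only at this
        rw [hek] at this
        rw [hJwin i hiI, hwE i hiE, ← hk, ← Finset.coe_orderIsoOfFin_apply C hNC k] at *
        have : J' i = n + ((eC k : ℤ)) := by
          simp only [eC]
          omega
        rw [this]
    funext i
    have hd := hdecomp i
    set r := (i - 1) % n + 1 with hr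
    have : i = r + n * ((i - 1) / n) := by omega
    rw [this, hshift', hshift, hJ'win r (hrmem i)]
end
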